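/- arXiv:2107.11330 — 3 statements merged into one kernel-verified Lean document; each statement's English description precedes it below -/
import Mathlib

section
/- For every non-positive integer −n (n ∈ ℕ), the function K(z) = Γ(z) + (sin(2πz)/(2π))·Γ'(z) has a removable singularity at z = −n; that is, the limit of K(z) as z → −n exists and is finite. -/
open Complex Filter Topology

noncomputable def K (z : ℂ) : ℂ :=
  Complex.Gamma z + Complex.sin (2 * Real.pi * z) / (2 * Real.pi) * deriv Complex.Gamma z

noncomputable def Kaux (z : ℂ) : ℂ :=
  Complex.cos (Real.pi * z) * (Complex.Gamma (1 - z))⁻¹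

lemma Kaux_differentiable : Differentiable ℂ Kaux := by
  have h1 : Differentiable ℂ fun z : ℂ => Complex.cos ((Real.pi : ℂ) * z) :=
    Complex.differentiable_cos.comp ((differentiable_const _).mul differentiable_id)
  have h2 : Differentiable ℂ fun z : ℂ => (Complex.Gamma (1 - z))⁻¹ :=
    Complex.differentiable_one_div_Gamma.comp ((differentiable_const (1 : ℂ)).sub differentiable_id)
  exact h1.mul h2

lemma deriv_Kaux_continuous : Continuous (deriv Kaux) := by
  have h : AnalyticOnNhd ℂ Kaux Set.univ :=
    Kaux_differentiable.differentiableOn.analyticOnNhd isOpen_univ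
  have h2 : AnalyticOnNhd ℂ (deriv Kaux) Set.univ := h.deriv
  exact continuous_iff_continuousAt.2 fun z => (h2 z (Set.mem_univ z)).continuousAt

lemma not_int_of_mem {n : ℕ} {z : ℂ} (hz : z ∈ Metric.ball (-(n : ℂ)) (1/2)) (hz' : z ≠ -(n : ℂ)) :
    ∀ m : ℤ, z ≠ (m : ℂ) := by
  rintro m rfl
  have h1 : (m : ℂ) + n ≠ 0 := by
    intro h
    apply hz'
    have : (m : ℂ) = -(n : ℂ) := by linear_combination h
    exact this
  have h2 : ((m + n : ℤ) : ℂ) ≠ 0 := by push_cast; exact h1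
  have h3 : (m + n : ℤ) ≠ 0 := fun h => h2 (by exact_mod_cast congrArg (Int.cast : ℤ → ℂ) h)
  have h4 : (1 : ℝ) ≤ ‖((m + n : ℤ) : ℂ)‖ := by
    rw [Complex.norm_intCast]
    exact_mod_cast Int.one_le_abs h3
  rw [Metric.mem_ball, Complex.dist_eq] at hz
  have : (m : ℂ) - -(n : ℂ) = ((m + n : ℤ) : ℂ) := by push_cast; ring
  rw [this] at hz
  linarith

lemma sin_pi_ne_zero {z : ℂ} (h : ∀ m : ℤ, z ≠ (m : ℂ)) : Complex.sin ((Real.pi : ℂ) * z) ≠ 0 := by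
  rw [Ne, Complex.sin_eq_zero_iff]
  rintro ⟨k, hk⟩
  have hpi : (Real.pi : ℂ) ≠ 0 := Complex.ofReal_ne_zero.2 Real.pi_ne_zero
  apply h k
  apply mul_left_cancel₀ hpi
  rw [hk]; ring

lemma Gamma_one_sub_ne_zero {z : ℂ} (h : ∀ m : ℤ, z ≠ (m : ℂ)) :
    Complex.Gamma (1 - z) ≠ 0 := by
  apply Complex.Gamma_ne_zero
  intro m hm
  apply h (1 + m)
  push_cast
  linear_combination -hm

lemma not_nat_neg {z : ℂ} (h : ∀ m : ℤ, z ≠ (m : ℂ)) : ∀ m : ℕ, z ≠ -(m : ℂ) := by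
  intro m hm
  apply h (-m)
  push_cast
  exact hm

lemma Kaux_eq {z : ℂ} (h : ∀ m : ℤ, z ≠ (m : ℂ)) :
    Complex.sin (2 * Real.pi * z) / (2 * Real.pi) * Complex.Gamma z = Kaux z := by
  have hpi : (Real.pi : ℂ) ≠ 0 := Complex.ofReal_ne_zero.2 Real.pi_ne_zero
  have hsin := sin_pi_ne_zero h
  have hΓ1 := Gamma_one_sub_ne_zero h
  have hmul : Complex.Gamma z * Complex.Gamma (1 - z) * Complex.sin ((Real.pi : ℂ) * z)
      = (Real.pi : ℂ) := by
    rw [Complex.Gamma_mul_Gamma_one_sub]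
    field_simp
  have hs2 : Complex.sin (2 * Real.pi * z)
      = 2 * Complex.sin ((Real.pi : ℂ) * z) * Complex.cos ((Real.pi : ℂ) * z) := by
    rw [show (2 * (Real.pi : ℂ) * z) = 2 * ((Real.pi : ℂ) * z) by ring, Complex.sin_two_mul]
  unfold Kaux
  rw [hs2]
  field_simp
  linear_combination Complex.cos ((Real.pi : ℂ) * z) * hmul

lemma hasDerivAt_s (z : ℂ) :
    HasDerivAt (fun w : ℂ => Complex.sin (2 * Real.pi * w) / (2 * Real.pi))
      (Complex.cos (2 * Real.pi * z)) z := by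
  have hpi : (Real.pi : ℂ) ≠ 0 := Complex.ofReal_ne_zero.2 Real.pi_ne_zero
  have h1 : HasDerivAt (fun w : ℂ => 2 * (Real.pi : ℂ) * w) (2 * Real.pi) z := by
    simpa using (hasDerivAt_id z).const_mul (2 * (Real.pi : ℂ))
  have h2 := (Complex.hasDerivAt_sin (2 * Real.pi * z)).comp z h1
  have h3 := h2.div_const (2 * Real.pi)
  exact h3.congr_deriv (mul_div_cancel_right₀ _ (mul_ne_zero two_ne_zero hpi))

theorem K_removable_singularity (n : ℕ) :
    ∃ c : ℂ, Tendsto K (𝓝[≠] (-(n : ℂ))) (𝓝 c) := by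
  have hpi : (Real.pi : ℂ) ≠ 0 := Complex.ofReal_ne_zero.2 Real.pi_ne_zero
  set f : ℂ → ℂ := fun z =>
    2 * Real.pi * Complex.sin ((Real.pi : ℂ) * z) * (Complex.Gamma (1 - z))⁻¹ + deriv Kaux z
    with hf
  have hU : IsOpen (Metric.ball (-(n : ℂ)) (1/2) \ {-(n : ℂ)}) :=
    Metric.isOpen_ball.sdiff isClosed_singleton
  have hKey : ∀ z ∈ Metric.ball (-(n : ℂ)) (1/2) \ {-(n : ℂ)}, K z = f z := by
    intro z hz
    have hne : ∀ m : ℤ, z ≠ (m : ℂ) := not_int_of_mem hz.1 hz.2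
    have hsin := sin_pi_ne_zero hne
    have hΓ1 := Gamma_one_sub_ne_zero hne
    have hΓd : DifferentiableAt ℂ Complex.Gamma z :=
      Complex.differentiableAt_Gamma z (not_nat_neg hne)
    have heq : Kaux =ᶠ[𝓝 z]
        fun w => Complex.sin (2 * Real.pi * w) / (2 * Real.pi) * Complex.Gamma w := by
      filter_upwards [hU.mem_nhds hz] with w hw
      exact (Kaux_eq (not_int_of_mem hw.1 hw.2)).symm
    have hd : deriv Kaux z = Complex.cos (2 * Real.pi * z) * Complex.Gamma z
        + Complex.sin (2 * Real.pi * z) / (2 * Real.pi) * deriv Complex.Gamma z := by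
      rw [heq.deriv_eq]
      exact ((hasDerivAt_s z).mul hΓd.hasDerivAt).deriv
    have hmul : Complex.Gamma z * Complex.Gamma (1 - z) * Complex.sin ((Real.pi : ℂ) * z)
        = (Real.pi : ℂ) := by
      rw [Complex.Gamma_mul_Gamma_one_sub]
      field_simp
    have hcos : Complex.cos (2 * Real.pi * z) = 1 - 2 * Complex.sin ((Real.pi : ℂ) * z) ^ 2 := by
      rw [show (2 * (Real.pi : ℂ) * z) = 2 * ((Real.pi : ℂ) * z) by ring, Complex.cos_two_mul]
      linear_combination 2 * (Complex.sin_sq_add_cos_sq ((Real.pi : ℂ) * z))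
    have h2 : Complex.Gamma z = 2 * Real.pi * Complex.sin ((Real.pi : ℂ) * z)
        * (Complex.Gamma (1 - z))⁻¹ + Complex.cos (2 * Real.pi * z) * Complex.Gamma z := by
      rw [hcos]
      field_simp
      linear_combination 2 * Complex.sin ((Real.pi : ℂ) * z) * hmul
    rw [hf]
    simp only [K, hd]
    linear_combination h2
  have hcont : ContinuousAt f (-(n : ℂ)) := by
    apply ContinuousAt.add
    · apply ContinuousAt.mul
      · exact (continuous_const.mul (Complex.continuous_sin.comp
          (continuous_const.mul continuous_id))).continuousAt
      · exact ((Complex.differentiable_one_div_Gamma.comp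
          ((differentiable_const (1 : ℂ)).sub differentiable_id)).continuous).continuousAt
    · exact deriv_Kaux_continuous.continuousAt
  refine ⟨f (-(n : ℂ)), ?_⟩
  have := hcont.continuousWithinAt (s := {(-(n : ℂ))}ᶜ)
  refine Tendsto.congr' ?_ this
  filter_upwards [self_mem_nhdsWithin,
    mem_nhdsWithin_of_mem_nhds (Metric.ball_mem_nhds (-(n : ℂ)) (by norm_num : (0:ℝ) < 1/2))] with z hz1 hz2
  exact (hKey z ⟨hz2, hz1⟩).symm
end

section
/- The limit of K(z) = Γ(z) + (sin(2πz)/(2π))·Γ'(z) as z → 0 equals −γ, where γ is the Euler–Mascheroni constant. -/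
open Complex Filter Topology

lemma sin_sub_bound (w : ℂ) (hw : norm w ≤ 1) :
    norm (w - Complex.sin w) ≤ norm w ^ 3 := by
  set E : ℂ → ℂ := fun x => Complex.exp x - (1 + x + x ^ 2 / 2) with hE
  have hEb : ∀ x : ℂ, norm x ≤ 1 → norm (E x) ≤ norm x ^ 3 * (2 / 9) := by
    intro x hx
    have h := Complex.exp_bound hx (n := 3) (by norm_num)
    have hsum : (∑ m ∈ Finset.range 3, x ^ m / m.factorial) = 1 + x + x ^ 2 / 2 := by
      simp [Finset.sum_range_succ]
    rw [hsum] at h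
    norm_num [Nat.factorial] at h
    simpa [hE] using h
  have h1 : norm (-(w * I)) ≤ 1 := by simpa using hw
  have h2 : norm (w * I) ≤ 1 := by simpa using hw
  have key : w - Complex.sin w = -(E (-(w * I)) - E (w * I)) * I / 2 := by
    have h := Complex.two_sin w
    have hI : (I : ℂ) ^ 2 = -1 := Complex.I_sq
    simp only [neg_mul] at h
    simp only [hE]
    linear_combination (-1/2 : ℂ) * h + w * hI
  rw [key]
  have habs : norm (-(E (-(w * I)) - E (w * I)) * I / 2)
      = norm (E (-(w * I)) - E (w * I)) / 2 := by
    rw [show -(E (-(w * I)) - E (w * I)) * I / 2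
        = (E (-(w * I)) - E (w * I)) * (-I) / 2 by ring]
    simp [map_div₀, map_neg_eq_map, Complex.norm_I]
  rw [habs]
  have hb : norm (E (-(w * I)) - E (w * I))
      ≤ norm (E (-(w * I))) + norm (E (w * I)) :=
    norm_sub_le _ _
  have e1 := hEb _ h1
  have e2 := hEb _ h2
  simp only [norm_neg, norm_mul, Complex.norm_I, mul_one] at e1 e2
  have h0 : 0 ≤ norm w ^ 3 := pow_nonneg (norm_nonneg w) 3
  linarith

theorem K_limit_at_zero :
    Tendsto K (𝓝[≠] (0 : ℂ)) (𝓝 (-(Real.eulerMascheroniConstant : ℂ))) := by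
  have hπ : (0:ℝ) < Real.pi := Real.pi_pos
  have hπ7 : (2:ℝ) * Real.pi ≤ 7 := by nlinarith [Real.pi_lt_d2]
  -- Part B : (z - sin(2πz)/(2π)) / z² → 0
  have hB : Tendsto (fun z : ℂ => (z - Complex.sin (2 * Real.pi * z) / (2 * Real.pi)) / z ^ 2)
      (𝓝[≠] (0:ℂ)) (𝓝 0) := by
    have hbound : ∀ᶠ z : ℂ in 𝓝[≠] (0:ℂ),
        ‖(z - Complex.sin (2 * Real.pi * z) / (2 * Real.pi)) / z ^ 2‖ ≤ 49 * norm z := by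
      have hball : ∀ᶠ z : ℂ in 𝓝 0, norm z ≤ 1/7 := by
        filter_upwards [Metric.ball_mem_nhds (0:ℂ) (by norm_num : (0:ℝ) < 1/7)] with z hz
        have := Metric.mem_ball.mp hz
        rw [Complex.dist_eq, sub_zero] at this
        exact this.le
      filter_upwards [eventually_nhdsWithin_of_eventually_nhds hball,
        self_mem_nhdsWithin] with z hz hz0
      have hz0' : z ≠ 0 := hz0
      have hπ0 : ((2 * Real.pi : ℝ) : ℂ) ≠ 0 := by
        exact_mod_cast (by positivity : (2 * Real.pi : ℝ) ≠ 0)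
      set w : ℂ := 2 * Real.pi * z with hw
      have hwabs : norm w = 2 * Real.pi * norm z := by
        simp [hw, map_mul, Complex.norm_real, abs_of_pos, hπ]
      have hw1 : norm w ≤ 1 := by
        rw [hwabs]; nlinarith [norm_nonneg z]
      have hnum : z - Complex.sin w / (2 * Real.pi) = (w - Complex.sin w) / (2 * Real.pi) := by
        rw [hw]
        have h2 : ((2:ℂ) * Real.pi) ≠ 0 := by exact_mod_cast hπ0
        field_simp
      rw [hnum]
      have hb := sin_sub_bound w hw1
      have habs : ‖(w - Complex.sin w) / (2 * Real.pi) / z ^ 2‖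
          = norm (w - Complex.sin w) / (2 * Real.pi) / norm z ^ 2 := by
        simp [map_div₀, map_pow, Complex.norm_real, abs_of_pos, hπ]
      rw [habs]
      rw [hwabs] at hb
      have hz2 : (0:ℝ) < norm z := by
        simpa [norm_pos_iff] using hz0'
      rw [div_div, div_le_iff₀ (by positivity)]
      have hc : (2*Real.pi)^3 ≤ 49 * (2*Real.pi) := by
        nlinarith [mul_le_mul hπ7 hπ7 (by positivity : (0:ℝ) ≤ 2*Real.pi)
          (by norm_num : (0:ℝ) ≤ 7), hπ]
      calc norm (w - Complex.sin w) ≤ (2 * Real.pi * norm z) ^ 3 := hb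
        _ = (2*Real.pi)^3 * norm z ^ 3 := by ring
        _ ≤ 49 * (2*Real.pi) * norm z ^ 3 :=
            mul_le_mul_of_nonneg_right hc (pow_nonneg hz2.le 3)
        _ = 49 * norm z * (2 * Real.pi * norm z ^ 2) := by ring
    apply squeeze_zero_norm' hbound
    have : Tendsto (fun z : ℂ => 49 * norm z) (𝓝 0) (𝓝 (49 * norm (0:ℂ))) :=
      ((continuous_norm (E := ℂ)).tendsto 0).const_mul 49
    simpa using this.mono_left nhdsWithin_le_nhds
  -- Part C : sin(2πz)/(2π)/z → 1
  have hC : Tendsto (fun z : ℂ => Complex.sin (2 * Real.pi * z) / (2 * Real.pi) / z)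
      (𝓝[≠] (0:ℂ)) (𝓝 1) := by
    have hslope : Tendsto (slope Complex.sin 0) (𝓝[≠] (0:ℂ)) (𝓝 1) := by
      have h := (Complex.hasDerivAt_sin 0)
      rw [hasDerivAt_iff_tendsto_slope] at h
      simpa using h
    have hm : Tendsto (fun z : ℂ => 2 * (Real.pi : ℂ) * z) (𝓝[≠] (0:ℂ)) (𝓝[≠] (0:ℂ)) := by
      rw [tendsto_nhdsWithin_iff]
      constructor
      · have : Tendsto (fun z : ℂ => 2 * (Real.pi : ℂ) * z) (𝓝 0) (𝓝 (2 * (Real.pi : ℂ) * 0)) :=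
          (continuous_const.mul continuous_id).tendsto 0
        simpa using this.mono_left nhdsWithin_le_nhds
      · filter_upwards [self_mem_nhdsWithin] with z hz
        have hz' : z ≠ 0 := hz
        have hπ0 : ((Real.pi : ℂ)) ≠ 0 := by exact_mod_cast hπ.ne'
        simp [Set.mem_compl_iff, hz', hπ0]
    have := hslope.comp hm
    apply this.congr'
    filter_upwards [self_mem_nhdsWithin] with z hz
    have hz' : z ≠ 0 := hz
    simp only [Function.comp_apply, slope_def_field, sub_zero, Complex.sin_zero]
    field_simp
  -- Part A : Γ(z+1) → 1
  have hA : Tendsto (fun z : ℂ => Complex.Gamma (z + 1)) (𝓝 (0:ℂ)) (𝓝 1) := by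
    have hcont : ContinuousAt Complex.Gamma 1 := by
      refine (Complex.differentiableAt_Gamma 1 fun m => ?_).continuousAt
      intro h
      have h2 : (1:ℂ).re = (-(m:ℂ)).re := by rw [h]
      simp only [Complex.one_re, Complex.neg_re, Complex.natCast_re] at h2
      have : (0:ℝ) ≤ m := Nat.cast_nonneg m
      linarith
    have h1 : Tendsto (fun z : ℂ => z + 1) (𝓝 (0:ℂ)) (𝓝 1) := by
      have : Tendsto (fun z : ℂ => z + 1) (𝓝 (0:ℂ)) (𝓝 (0 + 1)) :=
        (continuous_id.add continuous_const).tendsto 0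
      simpa using this
    have := hcont.tendsto.comp h1
    rwa [Complex.Gamma_one] at this
  -- Part D : deriv Γ (z+1) → -γ
  have hD : Tendsto (fun z : ℂ => deriv Complex.Gamma (z + 1)) (𝓝 (0:ℂ))
      (𝓝 (-(Real.eulerMascheroniConstant : ℂ))) := by
    have hU : IsOpen {z : ℂ | 0 < z.re} := isOpen_lt continuous_const Complex.continuous_re
    have hdiff : DifferentiableOn ℂ Complex.Gamma {z : ℂ | 0 < z.re} := by
      intro z hz
      refine (Complex.differentiableAt_Gamma z fun m => ?_).differentiableWithinAt
      intro h
      rw [h] at hz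
      simp only [Set.mem_setOf_eq] at hz
      rw [Complex.neg_re, Complex.natCast_re] at hz
      have : (0:ℝ) ≤ m := Nat.cast_nonneg m
      linarith
    have han : AnalyticOnNhd ℂ Complex.Gamma {z : ℂ | 0 < z.re} := hdiff.analyticOnNhd hU
    have hone : (1:ℂ) ∈ {z : ℂ | 0 < z.re} := by norm_num
    have hcont : ContinuousAt (deriv Complex.Gamma) 1 := (han.deriv 1 hone).continuousAt
    have hval : deriv Complex.Gamma 1 = -(Real.eulerMascheroniConstant : ℂ) := by
      simpa using Complex.hasDerivAt_Gamma_one.deriv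
    have h1 : Tendsto (fun z : ℂ => z + 1) (𝓝 (0:ℂ)) (𝓝 1) := by
      have : Tendsto (fun z : ℂ => z + 1) (𝓝 (0:ℂ)) (𝓝 (0 + 1)) :=
        (continuous_id.add continuous_const).tendsto 0
      simpa using this
    have := hcont.tendsto.comp h1
    rwa [hval] at this
  -- combine
  set F : ℂ → ℂ := fun z =>
      Complex.Gamma (z + 1) * ((z - Complex.sin (2 * Real.pi * z) / (2 * Real.pi)) / z ^ 2)
      + Complex.sin (2 * Real.pi * z) / (2 * Real.pi) / z * deriv Complex.Gamma (z + 1) with hF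
  have hFt : Tendsto F (𝓝[≠] (0:ℂ))
      (𝓝 (1 * 0 + 1 * (-(Real.eulerMascheroniConstant : ℂ)))) :=
    ((hA.mono_left nhdsWithin_le_nhds).mul hB).add
      (hC.mul (hD.mono_left nhdsWithin_le_nhds))
  rw [show (1:ℂ) * 0 + 1 * (-(Real.eulerMascheroniConstant : ℂ))
      = -(Real.eulerMascheroniConstant : ℂ) by ring] at hFt
  -- K = F eventually near 0
  have heq : ∀ᶠ z : ℂ in 𝓝[≠] (0:ℂ), F z = K z := by
    have hball : ∀ᶠ z : ℂ in 𝓝 0, norm z < 1/2 := by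
      filter_upwards [Metric.ball_mem_nhds (0:ℂ) (by norm_num : (0:ℝ) < 1/2)] with z hz
      have := Metric.mem_ball.mp hz
      rwa [Complex.dist_eq, sub_zero] at this
    filter_upwards [eventually_nhdsWithin_of_eventually_nhds hball,
      self_mem_nhdsWithin] with z hz hz0
    have hz0' : z ≠ 0 := hz0
    have hd1 : DifferentiableAt ℂ Complex.Gamma (z + 1) := by
      refine Complex.differentiableAt_Gamma _ fun m => ?_
      intro h
      have h2 : (z + 1).re = (-(m:ℂ)).re := by rw [h]
      simp only [Complex.add_re, Complex.one_re, Complex.neg_re, Complex.natCast_re] at h2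
      have h3 : |z.re| ≤ norm z := Complex.abs_re_le_norm z
      have h4 : (0:ℝ) ≤ m := Nat.cast_nonneg m
      have := abs_le.mp h3
      linarith
    have hΓ : Complex.Gamma z = Complex.Gamma (z + 1) / z := by
      rw [Complex.Gamma_add_one z hz0', mul_div_cancel_left₀ _ hz0']
    have hder : deriv Complex.Gamma z
        = (deriv Complex.Gamma (z + 1) * z - Complex.Gamma (z + 1) * 1) / z ^ 2 := by
      have hev : Complex.Gamma =ᶠ[𝓝 z] fun w => Complex.Gamma (w + 1) / w := by
        filter_upwards [isOpen_ne.mem_nhds hz0'] with w hw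
        rw [Complex.Gamma_add_one w hw, mul_div_cancel_left₀ _ hw]
      have h1 : HasDerivAt (fun w : ℂ => Complex.Gamma (w + 1))
          (deriv Complex.Gamma (z + 1)) z := by
        have := hd1.hasDerivAt.comp z ((hasDerivAt_id z).add_const 1)
        rw [mul_one] at this
        exact this
      have h2 : HasDerivAt (fun w : ℂ => Complex.Gamma (w + 1) / w)
          ((deriv Complex.Gamma (z + 1) * z - Complex.Gamma (z + 1) * 1) / z ^ 2) z :=
        h1.div (hasDerivAt_id z) hz0'
      rw [hev.deriv_eq, h2.deriv]
    simp only [hF, K, hΓ, hder]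
    have hπ0 : ((Real.pi : ℂ)) ≠ 0 := by exact_mod_cast hπ.ne'
    field_simp
    ring
  exact hFt.congr' heq
end

section
/- For all z ∈ ℂ that are not non-positive integers (with z+1 also not a non-positive integer), K(z+1) = z·K(z) + cos(πz)/Γ(1−z). -/
open Complex

theorem K_recurrence_reflection (z : ℂ) (hz : ∀ m : ℕ, z ≠ -(m : ℂ))
    (hz1 : ∀ m : ℕ, z + 1 ≠ -(m : ℂ)) :
    K (z + 1) = z * K z + Complex.cos (Real.pi * z) / Complex.Gamma (1 - z) := by
  have hz0 : z ≠ 0 := by simpa using hz 0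
  have hdiff : DifferentiableAt ℂ Complex.Gamma z := Complex.differentiableAt_Gamma z hz
  -- derivative recurrence
  have hderiv : deriv Complex.Gamma (z + 1)
      = Complex.Gamma z + z * deriv Complex.Gamma z := by
    have h1 : deriv (fun w => Complex.Gamma (w + 1)) z
        = deriv (fun w => w * Complex.Gamma w) z := by
      apply Filter.EventuallyEq.deriv_eq
      filter_upwards [isOpen_compl_singleton.mem_nhds
        (by simpa using hz0 : z ∈ ({0}ᶜ : Set ℂ))] with w hw
      exact Complex.Gamma_add_one w hw
    have h2 : deriv (fun w => Complex.Gamma (w + 1)) z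
        = deriv Complex.Gamma (z + 1) := by
      simpa using deriv_comp_add_const Complex.Gamma 1 z
    rw [← h2, h1, deriv_fun_mul differentiableAt_fun_id hdiff]
    simp
  have hGamma1 : Complex.Gamma (z + 1) = z * Complex.Gamma z :=
    Complex.Gamma_add_one z hz0
  have hsin : Complex.sin (2 * Real.pi * (z + 1)) = Complex.sin (2 * Real.pi * z) := by
    have : 2 * (Real.pi : ℂ) * (z + 1) = 2 * Real.pi * z + 2 * Real.pi := by ring
    rw [this, Complex.sin_add_two_pi]
  -- key reflection identity
  have hkey : Complex.sin (2 * Real.pi * z) / (2 * Real.pi) * Complex.Gamma z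
      = Complex.cos (Real.pi * z) / Complex.Gamma (1 - z) := by
    have hpi : ((Real.pi : ℂ)) ≠ 0 := by
      exact_mod_cast Complex.ofReal_ne_zero.mpr Real.pi_ne_zero
    by_cases hs : Complex.sin ((Real.pi : ℂ) * z) = 0
    · -- z is an integer, necessarily ≥ 1
      obtain ⟨k, hk⟩ := Complex.sin_eq_zero_iff.mp hs
      have hzk : z = (k : ℂ) := mul_left_cancel₀ hpi (by rw [hk]; ring)
      have hkpos : 0 < k := by
        by_contra h
        push_neg at h
        obtain ⟨m, hm⟩ := Int.exists_eq_neg_ofNat h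
        exact hz m (by rw [hzk, hm]; push_cast; ring)
      have h1z : Complex.Gamma (1 - z) = 0 := by
        obtain ⟨n, hn⟩ : ∃ n : ℕ, (1 : ℂ) - z = -(n : ℂ) := by
          refine ⟨(k - 1).toNat, ?_⟩
          have h' : (((k - 1).toNat : ℤ) : ℂ) = (k : ℂ) - 1 := by
            rw [Int.toNat_of_nonneg (by omega : (0:ℤ) ≤ k - 1)]; push_cast; ring
          have h'' : (((k - 1).toNat : ℕ) : ℂ) = (k : ℂ) - 1 := by exact_mod_cast h'
          rw [hzk, h'']; ring
        rw [hn]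
        exact Complex.Gamma_neg_nat_eq_zero n
      have hsin2 : Complex.sin (2 * Real.pi * z) = 0 := by
        have : (2 : ℂ) * Real.pi * z = 2 * ((Real.pi : ℂ) * z) := by ring
        rw [this, Complex.sin_two_mul, hs]; ring
      rw [hsin2, h1z]
      simp
    · have hrefl := Complex.Gamma_mul_Gamma_one_sub z
      have hG : Complex.Gamma z ≠ 0 := Complex.Gamma_ne_zero hz
      have hG1 : Complex.Gamma (1 - z) ≠ 0 := by
        intro h
        rw [h, mul_zero] at hrefl
        rcases div_eq_zero_iff.mp hrefl.symm with h' | h'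
        · exact hpi h'
        · exact hs h' 
      have h1 : Complex.Gamma (1 - z) = (Real.pi : ℂ) / Complex.sin (Real.pi * z) / Complex.Gamma z := by
        field_simp at hrefl ⊢
        linear_combination hrefl
      rw [h1]
      have h2 : Complex.sin (2 * Real.pi * z)
          = 2 * Complex.sin (Real.pi * z) * Complex.cos (Real.pi * z) := by
        have : (2 : ℂ) * Real.pi * z = 2 * ((Real.pi : ℂ) * z) := by ring
        rw [this, Complex.sin_two_mul]
      rw [h2]
      field_simp
  -- assemble
  unfold K
  rw [hGamma1, hderiv, hsin]
  rw [← hkey]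
  ring
end
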